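/- ∫₀¹ |T₅(x)| dx = 1/115200, where T₅(x) = -x³(x-1/2)(x-2/3)/120 for x ∈ [0,1/2) and T₅(x) = -(x-1)³(x-1/2)(x-1/3)/120 for x ∈ [1/2,1]. -/
import Mathlib

open intervalIntegral

theorem T5_abs_integral :
    (∫ x in (0:ℝ)..1,
      |if x < 1/2 then -(x ^ 3 * (x - 1/2) * (x - 2/3)) / 120
        else -((x - 1) ^ 3 * (x - 1/2) * (x - 1/3)) / 120|) = 1 / 115200 := by
  set f : ℝ → ℝ := fun x =>
    |if x < 1/2 then -(x ^ 3 * (x - 1/2) * (x - 2/3)) / 120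
      else -((x - 1) ^ 3 * (x - 1/2) * (x - 1/3)) / 120| with hf
  have g1 : ℝ → ℝ := fun x => (x^5 - 7/6*x^4 + 1/3*x^3)/120
  have e1 : Set.EqOn f (fun x => (x^5 - 7/6*x^4 + 1/3*x^3)/120) (Set.uIcc 0 (1/2)) := by
    intro x hx
    rw [Set.uIcc_of_le (by norm_num)] at hx
    obtain ⟨h0, h1⟩ := hx
    simp only [hf]
    rcases lt_or_eq_of_le h1 with h | h
    · have key : (0:ℝ) ≤ x ^ 3 * (1/2 - x) * (2/3 - x) :=
        mul_nonneg (mul_nonneg (pow_nonneg h0 3) (by linarith)) (by linarith)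
      rw [if_pos h, abs_of_nonpos (by nlinarith [key])]
      ring
    · rw [if_neg (by simp [h])]
      subst h; norm_num
  have e2 : Set.EqOn f (fun x => 1/720 - 1/90*x^1 + 1/30*x^2 - 17/360*x^3 + 23/720*x^4 - 1/120*x^5)
      (Set.uIcc (1/2) 1) := by
    intro x hx
    rw [Set.uIcc_of_le (by norm_num)] at hx
    obtain ⟨h0, h1⟩ := hx
    simp only [hf]
    have key : (0:ℝ) ≤ (1 - x) ^ 3 * (x - 1/2) * (x - 1/3) :=
      mul_nonneg (mul_nonneg (pow_nonneg (by linarith) 3) (by linarith)) (by linarith)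
    rw [if_neg (by linarith), abs_of_nonneg (by nlinarith [key])]
    ring
  have c1 : Continuous (fun x : ℝ => (x^5 - 7/6*x^4 + 1/3*x^3)/120) := by fun_prop
  have c2 : Continuous (fun x : ℝ =>
      1/720 - 1/90*x^1 + 1/30*x^2 - 17/360*x^3 + 23/720*x^4 - 1/120*x^5) := by fun_prop
  have i1 : IntervalIntegrable f MeasureTheory.volume 0 (1/2) := by
    rw [intervalIntegrable_iff]
    exact (intervalIntegrable_iff.mp (c1.intervalIntegrable 0 (1/2))).congr_fun
      (fun x hx => (e1 (Set.uIoc_subset_uIcc hx)).symm) measurableSet_uIoc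
  have i2 : IntervalIntegrable f MeasureTheory.volume (1/2) 1 := by
    rw [intervalIntegrable_iff]
    exact (intervalIntegrable_iff.mp (c2.intervalIntegrable (1/2) 1)).congr_fun
      (fun x hx => (e2 (Set.uIoc_subset_uIcc hx)).symm) measurableSet_uIoc
  have split := intervalIntegral.integral_add_adjacent_intervals i1 i2
  rw [← split, intervalIntegral.integral_congr e1, intervalIntegral.integral_congr e2]
  have P : ∀ n : ℕ, IntervalIntegrable (fun x : ℝ => x^n) MeasureTheory.volume 0 (1/2) :=
    fun n => (continuous_pow n).intervalIntegrable _ _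
  have v1 : (∫ x in (0:ℝ)..(1/2), (x^5 - 7/6*x^4 + 1/3*x^3)/120) = 1/230400 := by
    rw [intervalIntegral.integral_div,
      intervalIntegral.integral_add (((P 5).sub (((P 4)).const_mul _))) ((P 3).const_mul _),
      intervalIntegral.integral_sub (P 5) ((P 4).const_mul _),
      intervalIntegral.integral_const_mul, intervalIntegral.integral_const_mul,
      integral_pow, integral_pow, integral_pow]
    norm_num
  have Q : ∀ n : ℕ, IntervalIntegrable (fun x : ℝ => x^n) MeasureTheory.volume (1/2) 1 :=
    fun n => (continuous_pow n).intervalIntegrable _ _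
  have v2 : (∫ x in (1/2:ℝ)..1,
      (1/720 - 1/90*x^1 + 1/30*x^2 - 17/360*x^3 + 23/720*x^4 - 1/120*x^5)) = 1/230400 := by
    have Q1 : ∀ (c : ℝ) (n : ℕ), IntervalIntegrable (fun x : ℝ => c * x^n)
        MeasureTheory.volume (1/2) 1 := fun c n => (Q n).const_mul c
    have h0 : IntervalIntegrable (fun _ : ℝ => (1/720 : ℝ)) MeasureTheory.volume (1/2) 1 :=
      intervalIntegrable_const
    rw [intervalIntegral.integral_sub (((((h0.sub (Q1 _ 1)).add (Q1 _ 2)).sub (Q1 _ 3)).add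
        (Q1 _ 4))) (Q1 _ 5),
      intervalIntegral.integral_add ((((h0.sub (Q1 _ 1)).add (Q1 _ 2)).sub (Q1 _ 3))) (Q1 _ 4),
      intervalIntegral.integral_sub (((h0.sub (Q1 _ 1)).add (Q1 _ 2))) (Q1 _ 3),
      intervalIntegral.integral_add ((h0.sub (Q1 _ 1))) (Q1 _ 2),
      intervalIntegral.integral_sub h0 (Q1 _ 1)]
    simp only [intervalIntegral.integral_const_mul, integral_pow, intervalIntegral.integral_const]
    norm_num
  rw [v1, v2]
  norm_num
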